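/- If T and T' are trees of respective orders n and n' with 2 ≤ n ≤ n', then the forest number satisfies f(T □ T') ≤ n·n' − n + 1. -/

import Mathlib

open SimpleGraph

/-- The star `S_m = K_{1,m-1}` on `m` vertices, with center the vertex `0`. -/
def starGraph (m : ℕ) : SimpleGraph (Fin m) where
  Adj i j := i ≠ j ∧ (i.val = 0 ∨ j.val = 0)
  symm := ⟨fun _ _ h => ⟨h.1.symm, h.2.symm⟩⟩
  loopless := ⟨fun _ h => h.1 rfl⟩

/-- The decycling number: the minimum size of a set of vertices whose removal
leaves an acyclic graph. -/
noncomputable def decyclingNumber {V : Type*} [Fintype V] (G : SimpleGraph V) : ℕ :=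
  sInf {k | ∃ S : Finset V, S.card = k ∧ (G.induce ((↑S : Set V)ᶜ)).IsAcyclic}

/-- The forest number: the maximum size of a set of vertices inducing a forest. -/
noncomputable def forestNumber {V : Type*} [Fintype V] (G : SimpleGraph V) : ℕ :=
  sSup {k | ∃ S : Finset V, S.card = k ∧ (G.induce (↑S : Set V)).IsAcyclic}

/-- The matching number: the maximum size of a set of pairwise non-incident edges. -/
noncomputable def matchingNumber {V : Type*} [Fintype V] (G : SimpleGraph V) : ℕ :=
  sSup {k | ∃ M : Finset (Sym2 V), ↑M ⊆ G.edgeSet ∧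
    (M : Set (Sym2 V)).Pairwise (fun e f => ∀ v, ¬(v ∈ e ∧ v ∈ f)) ∧ M.card = k}

/-- Appending two paths that meet only at the junction vertex gives a path. -/
lemma my_isPath_append {V : Type*} {G : SimpleGraph V} {u v w : V}
    {p : G.Walk u v} {q : G.Walk v w} (hp : p.IsPath) (hq : q.IsPath)
    (h : ∀ a, a ∈ p.support → a ∈ q.support → a = v) : (p.append q).IsPath := by
  rw [SimpleGraph.Walk.isPath_def, SimpleGraph.Walk.support_append, List.nodup_append]
  refine ⟨hp.support_nodup, (List.tail_sublist _).nodup hq.support_nodup, ?_⟩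
  intro a ha b ha' hab
  rw [← hab] at ha'
  have haq : a ∈ q.support := List.mem_of_mem_tail ha'
  have hav : a = v := h a ha haq
  subst hav
  have hcons := q.support_eq_cons
  have hnd := hq.support_nodup
  rw [hcons] at hnd
  exact (List.nodup_cons.mp hnd).1 ha'

/-- The embedding of `T` into the induced subgraph of `T □ T'` on a set containing
the full fiber at `w`. -/
def fiberHomL {V W : Type*} (T : SimpleGraph V) (T' : SimpleGraph W) (S : Set (V × W))
    (w : W) (hw : ∀ v, (v, w) ∈ S) : T →g (T.boxProd T').induce S where
  toFun v := ⟨(v, w), hw v⟩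
  map_rel' h := SimpleGraph.boxProd_adj_left.mpr h

/-- The embedding of `T'` into the induced subgraph of `T □ T'` on a set containing
the full fiber at `v`. -/
def fiberHomR {V W : Type*} (T : SimpleGraph V) (T' : SimpleGraph W) (S : Set (V × W))
    (v : V) (hv : ∀ w, (v, w) ∈ S) : T' →g (T.boxProd T').induce S where
  toFun w := ⟨(v, w), hv w⟩
  map_rel' h := SimpleGraph.boxProd_adj_right.mpr h

lemma fiberHomL_inj {V W : Type*} (T : SimpleGraph V) (T' : SimpleGraph W) (S : Set (V × W))
    (w : W) (hw : ∀ v, (v, w) ∈ S) : Function.Injective (fiberHomL T T' S w hw) := by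
  intro a b h
  have h2 : ((a, w) : V × W) = (b, w) := congrArg Subtype.val h
  exact (Prod.ext_iff.mp h2).1

lemma fiberHomR_inj {V W : Type*} (T : SimpleGraph V) (T' : SimpleGraph W) (S : Set (V × W))
    (v : V) (hv : ∀ w, (v, w) ∈ S) : Function.Injective (fiberHomR T T' S v hv) := by
  intro a b h
  have h2 : ((v, a) : V × W) = (v, b) := congrArg Subtype.val h
  exact (Prod.ext_iff.mp h2).2

theorem forest_boxProd_trees_upper_bound
    {V W : Type*} [Fintype V] [Fintype W]
    (T : SimpleGraph V) (T' : SimpleGraph W) (n n' : ℕ)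
    (hn : Fintype.card V = n) (hn' : Fintype.card W = n')
    (h2 : 2 ≤ n) (hnn' : n ≤ n')
    (hT : T.IsTree) (hT' : T'.IsTree) :
    forestNumber (T.boxProd T') ≤ n * n' - n + 1 := by
  classical
  have hne : {k | ∃ S : Finset (V × W), S.card = k ∧
      ((T.boxProd T').induce (↑S : Set (V × W))).IsAcyclic}.Nonempty := by
    refine ⟨0, ∅, Finset.card_empty, ?_⟩
    intro v c
    exact absurd v.2 (by simp)
  refine csSup_le hne ?_
  rintro k ⟨S, hcard, hac⟩
  by_contra hk
  push_neg at hk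
  -- basic cardinality facts
  have hcardVW : Fintype.card (V × W) = n * n' := by
    rw [Fintype.card_prod, hn, hn']
  have hkle : k ≤ n * n' := by
    rw [← hcard, ← hcardVW]
    exact Finset.card_le_univ S
  have h2n : n + 2 ≤ n * n' := by
    have h1 : n * 2 ≤ n * n' := Nat.mul_le_mul_left n (le_trans h2 hnn')
    omega
  have hR : Sᶜ.card ≤ n - 2 := by
    rw [Finset.card_compl, hcardVW, hcard]
    omega
  -- two full vertical fibers
  have hBV : ((Sᶜ.image Prod.fst)ᶜ).card ≥ 2 := by
    have h1 : (Sᶜ.image Prod.fst).card ≤ n - 2 :=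
      le_trans Finset.card_image_le hR
    rw [Finset.card_compl, hn]
    omega
  obtain ⟨v1, hv1, v2, hv2, hvne⟩ := Finset.one_lt_card.mp (lt_of_lt_of_le one_lt_two hBV)
  have hgv1 : ∀ w, ((v1, w) : V × W) ∈ (↑S : Set (V × W)) := by
    intro w
    by_contra h
    exact Finset.mem_compl.mp hv1
      (Finset.mem_image.mpr ⟨(v1, w), Finset.mem_compl.mpr (by simpa using h), rfl⟩)
  have hgv2 : ∀ w, ((v2, w) : V × W) ∈ (↑S : Set (V × W)) := by
    intro w
    by_contra h
    exact Finset.mem_compl.mp hv2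
      (Finset.mem_image.mpr ⟨(v2, w), Finset.mem_compl.mpr (by simpa using h), rfl⟩)
  -- two full horizontal fibers
  have hBW : ((Sᶜ.image Prod.snd)ᶜ).card ≥ 2 := by
    have h1 : (Sᶜ.image Prod.snd).card ≤ n - 2 :=
      le_trans Finset.card_image_le hR
    rw [Finset.card_compl, hn']
    omega
  obtain ⟨w1, hw1, w2, hw2, hwne⟩ := Finset.one_lt_card.mp (lt_of_lt_of_le one_lt_two hBW)
  have hgw1 : ∀ v, ((v, w1) : V × W) ∈ (↑S : Set (V × W)) := by
    intro v
    by_contra h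
    exact Finset.mem_compl.mp hw1
      (Finset.mem_image.mpr ⟨(v, w1), Finset.mem_compl.mpr (by simpa using h), rfl⟩)
  have hgw2 : ∀ v, ((v, w2) : V × W) ∈ (↑S : Set (V × W)) := by
    intro v
    by_contra h
    exact Finset.mem_compl.mp hw2
      (Finset.mem_image.mpr ⟨(v, w2), Finset.mem_compl.mpr (by simpa using h), rfl⟩)
  -- paths in the trees
  set G' := (T.boxProd T').induce (↑S : Set (V × W)) with hG'
  obtain ⟨Q, hQ⟩ : ∃ Q : T.Walk v1 v2, Q.IsPath :=
    ⟨(hT.isConnected.preconnected v1 v2).some.toPath,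
      ((hT.isConnected.preconnected v1 v2).some.toPath).2⟩
  obtain ⟨Q', hQ'⟩ : ∃ Q' : T'.Walk w1 w2, Q'.IsPath :=
    ⟨(hT'.isConnected.preconnected w1 w2).some.toPath,
      ((hT'.isConnected.preconnected w1 w2).some.toPath).2⟩
  -- the two paths in the induced graph
  let fL1 := fiberHomL T T' (↑S : Set (V × W)) w1 hgw1
  let fL2 := fiberHomL T T' (↑S : Set (V × W)) w2 hgw2
  let fR1 := fiberHomR T T' (↑S : Set (V × W)) v1 hgv1
  let fR2 := fiberHomR T T' (↑S : Set (V × W)) v2 hgv2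
  let A1 : G'.Walk ⟨(v1, w1), hgv1 w1⟩ ⟨(v1, w2), hgv1 w2⟩ := Q'.map fR1
  let A2 : G'.Walk ⟨(v1, w2), hgv1 w2⟩ ⟨(v2, w2), hgv2 w2⟩ := Q.map fL2
  let B1 : G'.Walk ⟨(v1, w1), hgv1 w1⟩ ⟨(v2, w1), hgv2 w1⟩ := Q.map fL1
  let B2 : G'.Walk ⟨(v2, w1), hgv2 w1⟩ ⟨(v2, w2), hgv2 w2⟩ := Q'.map fR2
  have hA1 : A1.IsPath := SimpleGraph.Walk.map_isPath_of_injective (fiberHomR_inj _ _ _ _ _) hQ'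
  have hA2 : A2.IsPath := SimpleGraph.Walk.map_isPath_of_injective (fiberHomL_inj _ _ _ _ _) hQ
  have hB1 : B1.IsPath := SimpleGraph.Walk.map_isPath_of_injective (fiberHomL_inj _ _ _ _ _) hQ
  have hB2 : B2.IsPath := SimpleGraph.Walk.map_isPath_of_injective (fiberHomR_inj _ _ _ _ _) hQ'
  have hP1 : (A1.append A2).IsPath := by
    refine my_isPath_append hA1 hA2 ?_
    intro a ha ha'
    change _ ∈ (Q'.map fR1).support at ha
    change _ ∈ (Q.map fL2).support at ha'
    rw [SimpleGraph.Walk.support_map, List.mem_map] at ha ha'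
    obtain ⟨w, hwmem, rfl⟩ := ha
    obtain ⟨v, hvmem, hveq⟩ := ha'
    have h2 : ((v, w2) : V × W) = (v1, w) := congrArg Subtype.val hveq
    obtain ⟨h2a, h2b⟩ := Prod.ext_iff.mp h2
    subst h2a
    subst h2b
    exact Subtype.ext rfl
  have hP2 : (B1.append B2).IsPath := by
    refine my_isPath_append hB1 hB2 ?_
    intro a ha ha'
    change _ ∈ (Q.map fL1).support at ha
    change _ ∈ (Q'.map fR2).support at ha'
    rw [SimpleGraph.Walk.support_map, List.mem_map] at ha ha'
    obtain ⟨v, hvmem, rfl⟩ := ha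
    obtain ⟨w, hwmem, hweq⟩ := ha'
    have h2 : ((v2, w) : V × W) = (v, w1) := congrArg Subtype.val hweq
    obtain ⟨h2a, h2b⟩ := Prod.ext_iff.mp h2
    subst h2a
    subst h2b
    exact Subtype.ext rfl
  -- uniqueness of paths in the acyclic induced graph
  have hpu := SimpleGraph.isAcyclic_iff_path_unique.mp hac
  have heq : (⟨A1.append A2, hP1⟩ : G'.Path _ _) = ⟨B1.append B2, hP2⟩ := hpu _ _
  have hsupp : (A1.append A2).support = (B1.append B2).support := by
    rw [Subtype.mk.injEq] at heq
    rw [heq]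
  -- the junction vertex of the first path is not on the second path
  have hjmem : (⟨(v1, w2), hgv1 w2⟩ : ↥(↑S : Set (V × W))) ∈ (A1.append A2).support :=
    (SimpleGraph.Walk.mem_support_append_iff _ _).mpr (Or.inl A1.end_mem_support)
  rw [hsupp] at hjmem
  rcases (SimpleGraph.Walk.mem_support_append_iff _ _).mp hjmem with h | h
  · change _ ∈ (Q.map fL1).support at h
    rw [SimpleGraph.Walk.support_map, List.mem_map] at h
    obtain ⟨v, _, hveq⟩ := h
    have h2 : ((v, w1) : V × W) = (v1, w2) := congrArg Subtype.val hveq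
    exact hwne (Prod.ext_iff.mp h2).2
  · change _ ∈ (Q'.map fR2).support at h
    rw [SimpleGraph.Walk.support_map, List.mem_map] at h
    obtain ⟨w, _, hweq⟩ := h
    have h2 : ((v2, w) : V × W) = (v1, w2) := congrArg Subtype.val hweq
    exact hvne (Prod.ext_iff.mp h2).1.symm
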